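/- Let I be a finite poset that is forest-like (a finite disjoint union of tree-like posets). Then for every category C with the amalgamation property and the joint embedding property, every diagram F : I → C has a cocone. -/

import Mathlib

open CategoryTheory

universe v u

/-- A subset of a poset is connected: nonempty, and any two of its elements are
joined by a zigzag of comparabilities within the subset. -/
def ConnIn {α : Type*} [PartialOrder α] (s : Set α) : Prop :=
  s.Nonempty ∧ ∀ x ∈ s, ∀ y ∈ s,
    Relation.ReflTransGen (fun a b => a ∈ s ∧ b ∈ s ∧ (a ≤ b ∨ b ≤ a)) x y

/-- `K` is a connected component of the subset `s` of a poset: the set of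
elements of `s` joined within `s` to some fixed element of `s`. -/
def IsComp {α : Type*} [PartialOrder α] (s K : Set α) : Prop :=
  ∃ x ∈ s, K = {y | y ∈ s ∧
    Relation.ReflTransGen (fun a b => a ∈ s ∧ b ∈ s ∧ (a ≤ b ∨ b ≤ a)) x y}

/-- The inductive class of tree-like subsets of a poset: `s` is tree-like iff
it has a minimal element `b` such that every connected component `K` of
`s \ {b}` is tree-like and the part of `K` lying above `b` is connected (and
nonempty).  This is exactly the inductive rule: a tree-like poset is a disjoint
union of tree-like posets `K₁, …, Kₙ` with connected upward-closed subsets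
`Uₖ ⊆ Kₖ`, together with a new bottom point lying below exactly the `Uₖ`. -/
inductive TreeLike {α : Type*} [PartialOrder α] : Set α → Prop
  | mk (s : Set α) (b : α) (hb : b ∈ s)
      (hmin : ∀ x ∈ s, ¬ x < b)
      (hconn : ∀ K : Set α, IsComp (s \ {b}) K → ConnIn {x | x ∈ K ∧ b < x})
      (hcomp : ∀ K : Set α, IsComp (s \ {b}) K → TreeLike K) : TreeLike s

/-! ### Auxiliary definitions and lemmas -/

/-- The connected component of `i` inside the subset `t`. -/
def compOf {α : Type*} [PartialOrder α] (t : Set α) (i : α) : Set α :=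
  {y | y ∈ t ∧ Relation.ReflTransGen (fun a b => a ∈ t ∧ b ∈ t ∧ (a ≤ b ∨ b ≤ a)) i y}

lemma compOf_isComp {α : Type*} [PartialOrder α] {t : Set α} {i : α} (hi : i ∈ t) :
    IsComp t (compOf t i) := ⟨i, hi, rfl⟩

lemma mem_compOf {α : Type*} [PartialOrder α] {t : Set α} {i : α} (hi : i ∈ t) :
    i ∈ compOf t i := ⟨hi, Relation.ReflTransGen.refl⟩

lemma mem_compOf_of_le {α : Type*} [PartialOrder α] {t : Set α} {i j : α}
    (hi : i ∈ t) (hj : j ∈ t) (hle : i ≤ j) : j ∈ compOf t i :=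
  ⟨hj, Relation.ReflTransGen.single ⟨hi, hj, Or.inl hle⟩⟩

lemma compUnique {α : Type*} [PartialOrder α] {t K K' : Set α}
    (hK : IsComp t K) (hK' : IsComp t K') {i : α} (hi : i ∈ K) (hi' : i ∈ K') : K = K' := by
  obtain ⟨x, hx, rfl⟩ := hK
  obtain ⟨x', hx', rfl⟩ := hK'
  have hsymm : Symmetric (Relation.ReflTransGen
      (fun a b => a ∈ t ∧ b ∈ t ∧ (a ≤ b ∨ b ≤ a))) :=
    fun x y hxy => (@Relation.ReflTransGen.stdSymm _ _ ⟨fun a b h => ⟨h.2.1, h.1, h.2.2.symm⟩⟩).symm x y hxy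
  ext y
  constructor
  · rintro ⟨hy, hxy⟩
    exact ⟨hy, hi'.2.trans ((hsymm hi.2).trans hxy)⟩
  · rintro ⟨hy, hxy⟩
    exact ⟨hy, hi.2.trans ((hsymm hi'.2).trans hxy)⟩

/-- Finite iterated amalgamation: finitely many morphisms out of a common
object can be amalgamated into a single object. -/
lemma amalg {C : Type u} [Category.{v} C]
    (AP : ∀ {A B D : C} (f : A ⟶ B) (g : A ⟶ D),
      ∃ (X : C) (h : B ⟶ X) (k : D ⟶ X), f ≫ h = g ≫ k)
    {ι : Type} (A : C) (X : ι → C) (f : ∀ i, A ⟶ X i) (S : Finset ι) :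
    ∃ (Z : C) (a : A ⟶ Z) (g : ∀ i ∈ S, X i ⟶ Z), ∀ i hi, f i ≫ g i hi = a := by
  classical
  induction S using Finset.induction_on with
  | empty =>
      exact ⟨A, 𝟙 A, fun i hi => absurd hi (Finset.notMem_empty i),
        fun i hi => absurd hi (Finset.notMem_empty i)⟩
  | @insert j S hj IH =>
      obtain ⟨Z, a, g, hg⟩ := IH
      obtain ⟨W, h, k, hw⟩ := AP a (f j)
      refine ⟨W, a ≫ h, fun i hi =>
        if hij : i = j then eqToHom (congrArg X hij) ≫ k
        else g i (Finset.mem_of_mem_insert_of_ne hi hij) ≫ h, ?_⟩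
      intro i hi
      by_cases hij : i = j
      · subst hij
        simp [hw]
      · simp only [dif_neg hij]
        rw [← Category.assoc, hg]

/-- Every diagram over a tree-like subset of a finite poset has a cocone,
given the amalgamation property. -/
lemma treeCocone {α : Type} [Fintype α] [PartialOrder α]
    {C : Type u} [Category.{v} C]
    (AP : ∀ {A B D : C} (f : A ⟶ B) (g : A ⟶ D),
      ∃ (X : C) (h : B ⟶ X) (k : D ⟶ X), f ≫ h = g ≫ k)
    (F : α ⥤ C) {s : Set α} (hs : TreeLike s) :
    ∃ (X : C) (c : ∀ i, i ∈ s → (F.obj i ⟶ X)),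
      ∀ (i j : α) (hi : i ∈ s) (hj : j ∈ s) (hle : i ≤ j),
        F.map (homOfLE hle) ≫ c j hj = c i hi := by
  classical
  induction hs with
  | mk s b hb hmin hconn hcomp IH =>
    set t := s \ {b} with ht
    let ι := {K : Set α // IsComp t K}
    haveI : Fintype ι := Fintype.ofFinite ι
    choose X c hc using fun K : ι => IH K.1 K.2
    choose u hu using fun K : ι => (hconn K.1 K.2).1
    let f : ∀ K : ι, F.obj b ⟶ X K := fun K =>
      F.map (homOfLE (hu K).2.le) ≫ c K (u K) (hu K).1
    have key : ∀ (K : ι) (v : α) (hv : v ∈ K.1) (hbv : b < v),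
        F.map (homOfLE hbv.le) ≫ c K v hv = f K := by
      intro K v hv hbv
      have hcon := (hconn K.1 K.2).2 (u K) (hu K) v ⟨hv, hbv⟩
      revert hv hbv
      induction hcon with
      | refl => intro hv hbv; rfl
      | @tail m v hpath hstep ih =>
          intro hv hbv
          obtain ⟨⟨hm, hbm⟩, _, hcase | hcase⟩ := hstep
          · have he : homOfLE hbv.le = homOfLE hbm.le ≫ homOfLE hcase := by
              rw [homOfLE_comp]
            rw [he, F.map_comp, Category.assoc, hc K m v hm hv hcase]
            exact ih hm hbm
          · rw [← hc K v m hv hm hcase, ← Category.assoc, ← F.map_comp, homOfLE_comp]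
            exact ih hm hbm
    obtain ⟨Z, a, g, hg⟩ := amalg AP (F.obj b) X f Finset.univ
    let g' : ∀ K : ι, X K ⟶ Z := fun K => g K (Finset.mem_univ K)
    have hg' : ∀ K : ι, f K ≫ g' K = a := fun K => hg K (Finset.mem_univ K)
    have auxc : ∀ (K K' : ι), K = K' → ∀ (x : α) (h : x ∈ K.1) (h' : x ∈ K'.1),
        c K x h ≫ g' K = c K' x h' ≫ g' K' := by
      rintro K K' rfl x h h'; rfl
    refine ⟨Z, fun i hi =>
      if hib : i = b then eqToHom (congrArg F.obj hib) ≫ a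
      else c ⟨compOf t i, compOf_isComp ⟨hi, hib⟩⟩ i (mem_compOf ⟨hi, hib⟩) ≫
        g' ⟨compOf t i, compOf_isComp ⟨hi, hib⟩⟩, ?_⟩
    intro i j hi hj hle
    beta_reduce
    by_cases hjb : j = b
    · have hib : i = b := by
        by_contra hne
        exact hmin i hi (lt_of_le_of_ne (hle.trans (le_of_eq hjb)) hne)
      have hij : i = j := hib.trans hjb.symm
      subst hij
      rw [dif_pos hjb]
      have he : homOfLE hle = 𝟙 i := rfl
      rw [he, F.map_id, Category.id_comp]
    · have hjt : j ∈ t := ⟨hj, hjb⟩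
      rw [dif_neg hjb]
      by_cases hib : i = b
      · subst hib
        have hbj : i < j := lt_of_le_of_ne hle (Ne.symm hjb)
        rw [dif_pos rfl, eqToHom_refl, Category.id_comp, ← Category.assoc]
        have h1 : F.map (homOfLE hbj.le) ≫
            c ⟨compOf t j, compOf_isComp hjt⟩ j (mem_compOf hjt) =
            f ⟨compOf t j, compOf_isComp hjt⟩ :=
          key ⟨compOf t j, compOf_isComp hjt⟩ j (mem_compOf hjt) hbj
        rw [← hg' ⟨compOf t j, compOf_isComp hjt⟩, ← h1]
      · have hit : i ∈ t := ⟨hi, hib⟩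
        rw [dif_neg hib]
        have hK : (⟨compOf t j, compOf_isComp hjt⟩ : ι) =
            ⟨compOf t i, compOf_isComp hit⟩ :=
          Subtype.ext (compUnique (compOf_isComp hjt) (compOf_isComp hit)
            (mem_compOf hjt) (mem_compOf_of_le hit hjt hle))
        calc F.map (homOfLE hle) ≫
              c ⟨compOf t j, compOf_isComp hjt⟩ j (mem_compOf hjt) ≫
                g' ⟨compOf t j, compOf_isComp hjt⟩
            = F.map (homOfLE hle) ≫
              c ⟨compOf t i, compOf_isComp hit⟩ j (mem_compOf_of_le hit hjt hle) ≫
                g' ⟨compOf t i, compOf_isComp hit⟩ := by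
              rw [auxc _ _ hK j (mem_compOf hjt) (mem_compOf_of_le hit hjt hle)]
          _ = (F.map (homOfLE hle) ≫
              c ⟨compOf t i, compOf_isComp hit⟩ j (mem_compOf_of_le hit hjt hle)) ≫
                g' ⟨compOf t i, compOf_isComp hit⟩ := by rw [Category.assoc]
          _ = c ⟨compOf t i, compOf_isComp hit⟩ i (mem_compOf hit) ≫
                g' ⟨compOf t i, compOf_isComp hit⟩ := by
              rw [hc _ i j (mem_compOf hit) (mem_compOf_of_le hit hjt hle) hle]

/-- Every diagram over a finite forest-like poset (a finite disjoint union of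
tree-like posets, i.e. every connected component is tree-like) in a category
with the amalgamation property and the joint embedding property has a
cocone. -/
theorem stmt_16 {α : Type} [Fintype α] [PartialOrder α]
    (hforest : ∀ K : Set α, IsComp (Set.univ : Set α) K → TreeLike K)
    {C : Type u} [Category.{v} C]
    (AP : ∀ {A B D : C} (f : A ⟶ B) (g : A ⟶ D),
      ∃ (X : C) (h : B ⟶ X) (k : D ⟶ X), f ≫ h = g ≫ k)
    (JEP : ∀ (n : ℕ) (o : Fin n → C), ∃ Z : C, ∀ k, Nonempty (o k ⟶ Z))
    (F : α ⥤ C) :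
    ∃ (X : C) (c : ∀ i : α, F.obj i ⟶ X),
      ∀ {i j : α} (f : i ⟶ j), F.map f ≫ c j = c i := by
  classical
  let ι := {K : Set α // IsComp (Set.univ : Set α) K}
  haveI : Fintype ι := Fintype.ofFinite ι
  choose X c hc using fun K : ι => treeCocone AP F (hforest K.1 K.2)
  obtain ⟨Z, hZ⟩ := JEP (Fintype.card ι) (fun k => X ((Fintype.equivFin ι).symm k))
  let g : ∀ K : ι, X K ⟶ Z := fun K =>
    eqToHom (congrArg X ((Fintype.equivFin ι).symm_apply_apply K).symm) ≫
      (hZ ((Fintype.equivFin ι) K)).some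
  have auxc : ∀ (K K' : ι), K = K' → ∀ (x : α) (h : x ∈ K.1) (h' : x ∈ K'.1),
      c K x h ≫ g K = c K' x h' ≫ g K' := by
    rintro K K' rfl x h h'; rfl
  refine ⟨Z, fun i =>
    c ⟨compOf Set.univ i, compOf_isComp (Set.mem_univ i)⟩ i (mem_compOf (Set.mem_univ i)) ≫
      g ⟨compOf Set.univ i, compOf_isComp (Set.mem_univ i)⟩, ?_⟩
  intro i j fij
  have hle : i ≤ j := leOfHom fij
  have hf : fij = homOfLE hle := Subsingleton.elim _ _
  subst hf
  have hK : (⟨compOf Set.univ j, compOf_isComp (Set.mem_univ j)⟩ : ι) =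
      ⟨compOf Set.univ i, compOf_isComp (Set.mem_univ i)⟩ :=
    Subtype.ext (compUnique (compOf_isComp (Set.mem_univ j))
      (compOf_isComp (Set.mem_univ i)) (mem_compOf (Set.mem_univ j))
      (mem_compOf_of_le (Set.mem_univ i) (Set.mem_univ j) hle))
  show F.map (homOfLE hle) ≫
      c ⟨compOf Set.univ j, compOf_isComp (Set.mem_univ j)⟩ j (mem_compOf (Set.mem_univ j)) ≫
        g ⟨compOf Set.univ j, compOf_isComp (Set.mem_univ j)⟩ =
      c ⟨compOf Set.univ i, compOf_isComp (Set.mem_univ i)⟩ i (mem_compOf (Set.mem_univ i)) ≫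
        g ⟨compOf Set.univ i, compOf_isComp (Set.mem_univ i)⟩
  rw [auxc _ _ hK j (mem_compOf (Set.mem_univ j))
      (mem_compOf_of_le (Set.mem_univ i) (Set.mem_univ j) hle),
    ← Category.assoc,
    hc _ i j (mem_compOf (Set.mem_univ i))
      (mem_compOf_of_le (Set.mem_univ i) (Set.mem_univ j) hle) hle]
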